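/- Suppose V has dimension 2 over ℝ. Then for every element U of the Clifford algebra Cl(Q), the four products U·reverse(involute(U)), reverse(involute(U))·U, involute(U)·reverse(U), and reverse(U)·involute(U) are all equal, and this common element is a scalar, i.e. lies in the range of the algebra map ℝ → Cl(Q). -/

import Mathlib

set_option maxHeartbeats 1000000

open CliffordAlgebra

theorem stmt_8 {V : Type*} [AddCommGroup V] [Module ℝ V] (Q : QuadraticForm ℝ V)
    (h : Module.finrank ℝ V = 2) (U : CliffordAlgebra Q) :
    U * reverse (involute U) = reverse (involute U) * U ∧
    U * reverse (involute U) = involute U * reverse U ∧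
    U * reverse (involute U) = reverse U * involute U ∧
    U * reverse (involute U) ∈ Set.range (algebraMap ℝ (CliffordAlgebra Q)) := by
  have hfd : Module.Finite ℝ V := Module.finite_of_finrank_eq_succ h
  let e : Module.Basis (Fin 2) ℝ V := Module.finBasisOfFinrankEq ℝ V h
  set X : CliffordAlgebra Q := ι Q (e 0) with hXdef
  set Y : CliffordAlgebra Q := ι Q (e 1) with hYdef
  set qx : ℝ := Q (e 0) with hqx
  set qy : ℝ := Q (e 1) with hqy
  set p : ℝ := QuadraticMap.polar Q (e 0) (e 1) with hp
  have hX : X * X = qx • (1 : CliffordAlgebra Q) := by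
    rw [hXdef, ι_sq_scalar, Algebra.algebraMap_eq_smul_one]
  have hY : Y * Y = qy • (1 : CliffordAlgebra Q) := by
    rw [hYdef, ι_sq_scalar, Algebra.algebraMap_eq_smul_one]
  have hYX0 : Y * X = p • (1 : CliffordAlgebra Q) - X * Y := by
    rw [hYdef, hXdef, ι_mul_ι_comm, Algebra.algebraMap_eq_smul_one, hp,
      QuadraticMap.polar_comm]
  have hXX : ∀ z : CliffordAlgebra Q, X * (X * z) = qx • z := by
    intro z; rw [← mul_assoc, hX, smul_mul_assoc, one_mul]
  have hYY : ∀ z : CliffordAlgebra Q, Y * (Y * z) = qy • z := by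
    intro z; rw [← mul_assoc, hY, smul_mul_assoc, one_mul]
  have hYX : ∀ z : CliffordAlgebra Q, Y * (X * z) = p • z - X * (Y * z) := by
    intro z; rw [← mul_assoc, hYX0, sub_mul, smul_mul_assoc, one_mul, mul_assoc]
  -- decomposition
  have hdec : ∃ a b c d : ℝ, U = a • 1 + b • X + c • Y + d • (X * Y) := by
    induction U using CliffordAlgebra.induction with
    | algebraMap r =>
      exact ⟨r, 0, 0, 0, by rw [Algebra.algebraMap_eq_smul_one]; module⟩
    | ι v =>
      refine ⟨0, e.repr v 0, e.repr v 1, 0, ?_⟩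
      have hv : v = e.repr v 0 • e 0 + e.repr v 1 • e 1 := by
        conv_lhs => rw [← e.sum_repr v]
        rw [Fin.sum_univ_two]
      conv_lhs => rw [hv, map_add, map_smul, map_smul, ← hXdef, ← hYdef]
      module
    | mul u w hu hw =>
      obtain ⟨a, b, c, d, rfl⟩ := hu
      obtain ⟨a', b', c', d', rfl⟩ := hw
      refine ⟨a*a' + qx*(b*b') + qy*(c*c') + p*(c*b') - qx*qy*(d*d'),
              a*b' + b*a' - qy*(c*d') + p*(d*b') + qy*(d*c'),
              a*c' + qx*(b*d') + c*a' + p*(c*d') - qx*(d*b'),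
              a*d' + b*c' - c*b' + d*a' + p*(d*d'), ?_⟩
      simp only [mul_add, add_mul, mul_sub, sub_mul, smul_mul_assoc, mul_smul_comm,
        mul_assoc, one_mul, mul_one, hXX, hYY, hYX, hX, hY, hYX0, smul_sub, smul_add, smul_smul]
      module
    | add u w hu hw =>
      obtain ⟨a, b, c, d, rfl⟩ := hu
      obtain ⟨a', b', c', d', rfl⟩ := hw
      exact ⟨a + a', b + b', c + c', d + d', by module⟩
  obtain ⟨a, b, c, d, rfl⟩ := hdec
  have hinvrev : reverse (involute (a • 1 + b • X + c • Y + d • (X * Y)))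
      = a • 1 - b • X - c • Y + d • (Y * X) := by
    simp only [map_add, map_smul, map_one, involute_ι, hXdef, hYdef, map_mul,
      reverse.map_mul, reverse_ι, reverse.map_one, neg_mul_neg, smul_neg, map_neg]
    module
  have hinv : involute (a • 1 + b • X + c • Y + d • (X * Y))
      = a • 1 - b • X - c • Y + d • (X * Y) := by
    simp only [map_add, map_smul, map_one, involute_ι, hXdef, hYdef, map_mul, neg_mul_neg,
      smul_neg, map_neg]
    module
  have hrev : reverse (a • 1 + b • X + c • Y + d • (X * Y))
      = a • 1 + b • X + c • Y + d • (Y * X) := by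
    simp only [map_add, map_smul, reverse.map_one, hXdef, hYdef, reverse.map_mul, reverse_ι]
  rw [hinvrev, hinv, hrev]
  refine ⟨?_, ?_, ?_, ⟨a^2 + a*d*p + d^2*(qx*qy) - b^2*qx - c^2*qy - b*c*p, ?_⟩⟩
  · simp only [mul_add, add_mul, mul_sub, sub_mul, smul_mul_assoc, mul_smul_comm,
      mul_assoc, one_mul, mul_one, hXX, hYY, hYX, hX, hY, hYX0, smul_sub, smul_add, smul_smul]
    module
  · simp only [mul_add, add_mul, mul_sub, sub_mul, smul_mul_assoc, mul_smul_comm,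
      mul_assoc, one_mul, mul_one, hXX, hYY, hYX, hX, hY, hYX0, smul_sub, smul_add, smul_smul]
    module
  · simp only [mul_add, add_mul, mul_sub, sub_mul, smul_mul_assoc, mul_smul_comm,
      mul_assoc, one_mul, mul_one, hXX, hYY, hYX, hX, hY, hYX0, smul_sub, smul_add, smul_smul]
    module
  · rw [Algebra.algebraMap_eq_smul_one]
    simp only [mul_add, add_mul, mul_sub, sub_mul, smul_mul_assoc, mul_smul_comm,
      mul_assoc, one_mul, mul_one, hXX, hYY, hYX, hX, hY, hYX0, smul_sub, smul_add, smul_smul]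
    module
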